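/- If a multivariate polynomial Z(y_1,...,y_m) is stable and e is an index, then both the partial derivative Z_e = ∂Z/∂y_e and the restriction Z^e = Z|_{y_e=0} are stable (or identically zero). -/

import Mathlib

open MvPolynomial

/-- The deletion `Z^e`: the polynomial `Z` with `y_e` set to `0`. -/
noncomputable def del {m : ℕ} (e : Fin m) (Z : MvPolynomial (Fin m) ℝ) : MvPolynomial (Fin m) ℝ :=
  aeval (fun i => if i = e then (0 : MvPolynomial (Fin m) ℝ) else X i) Z

/-- Multiaffine: every variable occurs to at most the first power. -/
def Multiaffine {m : ℕ} (Z : MvPolynomial (Fin m) ℝ) : Prop :=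
  ∀ e : Fin m, Z.degreeOf e ≤ 1


/-- A real polynomial is stable if it does not vanish when all variables lie in the
open upper half-plane. -/
def Stable {m : ℕ} (Z : MvPolynomial (Fin m) ℝ) : Prop :=
  ∀ y : Fin m → ℂ, (∀ e, 0 < (y e).im) →
    eval y (MvPolynomial.map (algebraMap ℝ ℂ) Z) ≠ 0

namespace StableMinorsAux

open Polynomial Metric in
/-- Minimum modulus principle on a closed ball for a nonvanishing holomorphic function. -/
lemma minmod {g : ℂ → ℂ} {r : ℝ} (hr : 0 < r) (hg : Differentiable ℂ g)
    (hne : ∀ u ∈ closedBall (0:ℂ) r, g u ≠ 0) :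
    ∃ u ∈ sphere (0:ℂ) r, ‖g u‖ ≤ ‖g 0‖ := by
  have hsub : ball (0:ℂ) r ⊆ closedBall 0 r := ball_subset_closedBall
  have hinv : DiffContOnCl ℂ (fun u => (g u)⁻¹) (ball (0:ℂ) r) := by
    constructor
    · exact fun u hu => ((hg u).inv (hne u (hsub hu))).differentiableWithinAt
    · rw [closure_ball _ hr.ne']
      exact fun u hu => ((hg u).continuousAt.inv₀ (hne u hu)).continuousWithinAt
  have hcont : ContinuousOn (fun u => ‖(g u)⁻¹‖) (sphere (0:ℂ) r) :=
    ((hg.continuous.continuousOn.inv₀ (fun u hu => hne u (sphere_subset_closedBall hu)))).norm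
  obtain ⟨u0, hu0s, hu0max⟩ := (isCompact_sphere (0:ℂ) r).exists_isMaxOn
    (NormedSpace.sphere_nonempty.mpr hr.le) hcont
  have hb : ‖(g 0)⁻¹‖ ≤ ‖(g u0)⁻¹‖ := by
    refine Complex.norm_le_of_forall_mem_frontier_norm_le isBounded_ball hinv ?_ ?_
    · rw [frontier_ball _ hr.ne']; exact hu0max
    · rw [closure_ball _ hr.ne']; exact mem_closedBall_self hr.le
  refine ⟨u0, hu0s, ?_⟩
  have h0 : g 0 ≠ 0 := hne 0 (mem_closedBall_self hr.le)
  have hu0 : g u0 ≠ 0 := hne u0 (sphere_subset_closedBall hu0s)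
  rw [norm_inv, norm_inv] at hb
  exact (inv_le_inv₀ (norm_pos_iff.mpr h0) (norm_pos_iff.mpr hu0)).mp hb

open Polynomial in
lemma prodIm (w : ℂ) (hw : 0 < w.im) :
    ∀ (s : Multiset ℂ), (∀ r ∈ s, r.im ≤ 0) →
      ((s.map (fun r => Polynomial.X - Polynomial.C r)).prod.eval w ≠ 0 ∧
       ((derivative (s.map (fun r => Polynomial.X - Polynomial.C r)).prod).eval w /
          (s.map (fun r => Polynomial.X - Polynomial.C r)).prod.eval w).im ≤ 0 ∧
       (s ≠ 0 → ((derivative (s.map (fun r => Polynomial.X - Polynomial.C r)).prod).eval w /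
          (s.map (fun r => Polynomial.X - Polynomial.C r)).prod.eval w).im < 0)) := by
  intro s
  induction s using Multiset.induction_on with
  | empty => intro _; simp
  | cons a s ih =>
    intro hroots
    have ha : a.im ≤ 0 := hroots a (Multiset.mem_cons_self a s)
    obtain ⟨h1, h2, _⟩ := ih (fun r hr => hroots r (Multiset.mem_cons_of_mem hr))
    have hwa : w - a ≠ 0 := by
      intro h
      have : (w - a).im = 0 := by rw [h]; simp
      simp [Complex.sub_im] at this
      linarith
    set p := (s.map (fun r => Polynomial.X - Polynomial.C r)).prod with hp
    have hprod : ((a ::ₘ s).map (fun r => Polynomial.X - Polynomial.C r)).prod = (Polynomial.X - Polynomial.C a) * p := by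
      rw [Multiset.map_cons, Multiset.prod_cons]
    have heval : (((a ::ₘ s).map (fun r => Polynomial.X - Polynomial.C r)).prod).eval w = (w - a) * p.eval w := by
      rw [hprod]; simp
    have hne : (((a ::ₘ s).map (fun r => Polynomial.X - Polynomial.C r)).prod).eval w ≠ 0 := by
      rw [heval]; exact mul_ne_zero hwa h1
    have hderiv : (derivative (((a ::ₘ s).map (fun r => Polynomial.X - Polynomial.C r)).prod)).eval w
        = p.eval w + (w - a) * (derivative p).eval w := by
      rw [hprod, derivative_mul]; simp
    have hsplit : (derivative (((a ::ₘ s).map (fun r => Polynomial.X - Polynomial.C r)).prod)).eval w /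
        (((a ::ₘ s).map (fun r => Polynomial.X - Polynomial.C r)).prod).eval w
        = (w - a)⁻¹ + (derivative p).eval w / p.eval w := by
      rw [heval, hderiv]
      field_simp
    have him : ((w - a)⁻¹).im < 0 := by
      rw [Complex.inv_im]
      apply div_neg_of_neg_of_pos
      · simp [Complex.sub_im]; linarith
      · exact Complex.normSq_pos.mpr hwa
    have hlt : ((derivative (((a ::ₘ s).map (fun r => Polynomial.X - Polynomial.C r)).prod)).eval w /
        (((a ::ₘ s).map (fun r => Polynomial.X - Polynomial.C r)).prod).eval w).im < 0 := by
      rw [hsplit, Complex.add_im]; linarith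
    exact ⟨hne, hlt.le, fun _ => hlt⟩

open Polynomial in
/-- Gauss–Lucas for the upper half-plane: if a complex polynomial has no roots with
positive imaginary part, and its derivative vanishes at a point with positive imaginary
part, then the derivative is identically zero. -/
lemma gaussLucas (q : Polynomial ℂ) (hq : ∀ t : ℂ, 0 < t.im → q.eval t ≠ 0)
    {w : ℂ} (hw : 0 < w.im) (h0 : (derivative q).eval w = 0) : derivative q = 0 := by
  by_cases hq0 : q = 0
  · simp [hq0]
  by_cases hdeg : q.natDegree = 0
  · obtain ⟨c, rfl⟩ := Polynomial.natDegree_eq_zero.mp hdeg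
    simp
  have hsplits : q.Splits := IsAlgClosed.splits q
  have hfact := (C_leadingCoeff_mul_prod_multiset_X_sub_C (splits_iff_card_roots.mp hsplits)).symm
  have hcard : q.roots.card = q.natDegree := by
    exact splits_iff_card_roots.mp hsplits
  have hroots_im : ∀ r ∈ q.roots, r.im ≤ 0 := by
    intro r hr
    by_contra h
    exact hq r (lt_of_not_ge h) ((mem_roots hq0).mp hr)
  obtain ⟨h1, _, h3⟩ := prodIm w hw q.roots hroots_im
  have hs0 : q.roots ≠ 0 := by
    intro h
    rw [h] at hcard
    simp at hcard
    omega
  have hlt := h3 hs0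
  have hlc : q.leadingCoeff ≠ 0 := leadingCoeff_ne_zero.mpr hq0
  exfalso
  have hd : (derivative q).eval w
      = q.leadingCoeff * (derivative ((q.roots.map (fun r => Polynomial.X - Polynomial.C r)).prod)).eval w := by
    conv_lhs => rw [hfact]
    rw [derivative_C_mul]
    simp
  have : (derivative ((q.roots.map (fun r => Polynomial.X - Polynomial.C r)).prod)).eval w = 0 := by
    rw [hd] at h0
    exact (mul_eq_zero.mp h0).resolve_left hlc
  rw [this, zero_div] at hlt
  simp at hlt

lemma evalLine {m : ℕ} (g : Fin m → Polynomial ℂ) (p : MvPolynomial (Fin m) ℂ) (u : ℂ) :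
    (MvPolynomial.aeval g p).eval u = eval (fun i => (g i).eval u) p := by
  induction p using MvPolynomial.induction_on with
  | C a => simp
  | add p q hp hq => simp [hp, hq]
  | mul_X p i hp => simp [hp]

/-- The polynomial `p` viewed as a univariate polynomial in the variable `e`. -/
noncomputable def toUni {m : ℕ} (e : Fin m) (p : MvPolynomial (Fin m) ℂ) :
    Polynomial (MvPolynomial (Fin m) ℂ) :=
  MvPolynomial.aeval (fun i => if i = e then Polynomial.X else Polynomial.C (X i)) p

lemma toUni_evalEval {m : ℕ} (e : Fin m) (p : MvPolynomial (Fin m) ℂ) (z : Fin m → ℂ) (t : ℂ) :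
    ((toUni e p).map (eval z : MvPolynomial (Fin m) ℂ →+* ℂ)).eval t
      = eval (Function.update z e t) p := by
  induction p using MvPolynomial.induction_on with
  | C a => simp [toUni]
  | add p q hp hq =>
    simp only [toUni, map_add, Polynomial.map_add, Polynomial.eval_add] at *
    rw [hp, hq]
  | mul_X p i hp =>
    simp only [toUni, map_mul, Polynomial.map_mul, Polynomial.eval_mul, eval_mul] at *
    rw [hp]
    congr 1
    by_cases h : i = e <;> simp [h, Function.update_apply]

lemma toUni_derivative {m : ℕ} (e : Fin m) (p : MvPolynomial (Fin m) ℂ) :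
    Polynomial.derivative (toUni e p) = toUni e (pderiv e p) := by
  induction p using MvPolynomial.induction_on with
  | C a => simp [toUni]
  | add p q hp hq =>
    simp only [toUni, map_add, Polynomial.derivative_add] at *
    rw [hp, hq]
  | mul_X p i hp =>
    simp only [toUni, map_mul] at *
    rw [Polynomial.derivative_mul, hp, pderiv_mul, map_add, map_mul, pderiv_X]
    by_cases h : i = e <;> simp [h, Pi.single_apply, mul_comm]

lemma toUni_eq_zero {m : ℕ} (e : Fin m) (p : MvPolynomial (Fin m) ℂ)
    (h : toUni e p = 0) : p = 0 := by
  apply MvPolynomial.funext (q := 0)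
  intro z
  have h2 := toUni_evalEval e p z (z e)
  rw [h] at h2
  simpa [Function.update_eq_self] using h2.symm

lemma diffLine {m : ℕ} (p : MvPolynomial (Fin m) ℂ) (a v : Fin m → ℂ) :
    Differentiable ℂ (fun u : ℂ => eval (fun i => a i + u * v i) p) := by
  have heq : (fun u : ℂ => eval (fun i => a i + u * v i) p) = fun u =>
      (MvPolynomial.aeval
        (fun i => Polynomial.C (a i) + Polynomial.X * Polynomial.C (v i)) p).eval u := by
    funext u
    have harg : (fun i => Polynomial.eval u (Polynomial.C (a i) + Polynomial.X * Polynomial.C (v i)))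
        = fun i => a i + u * v i := by funext i; simp; ring
    rw [evalLine, harg]
  rw [heq]
  exact Polynomial.differentiable _

lemma diffLineUpd {m : ℕ} (p : MvPolynomial (Fin m) ℂ) (e : Fin m) (w : ℂ) (a v : Fin m → ℂ) :
    Differentiable ℂ (fun u : ℂ => eval (Function.update (fun i => a i + u * v i) e w) p) := by
  have h2 : (fun u : ℂ => eval (Function.update (fun i => a i + u * v i) e w) p)
      = fun u : ℂ => eval (fun i => Function.update a e w i + u * Function.update v e 0 i) p := by
    funext u
    have h3 : Function.update (fun i => a i + u * v i) e w
        = fun i => Function.update a e w i + u * Function.update v e 0 i := by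
      funext i
      rcases eq_or_ne i e with rfl | h
      · simp
      · simp [Function.update_apply, h]
    rw [h3]
  rw [h2]
  exact diffLine p _ _

lemma updIm {m : ℕ} (e : Fin m) (z : Fin m → ℂ) (t : ℂ) (ht : 0 < t.im)
    (hz : ∀ i, 0 < (z i).im) : ∀ i, 0 < ((Function.update z e t) i).im := by
  intro i
  rcases eq_or_ne i e with rfl | h
  · simpa using ht
  · simpa [Function.update_apply, h] using hz i

lemma expand {m : ℕ} (e : Fin m) (P : MvPolynomial (Fin m) ℂ) (z : Fin m → ℂ) (t : ℂ) :
    eval (Function.update z e t) P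
      = ∑ k ∈ Finset.range ((toUni e P).natDegree + 1), eval z ((toUni e P).coeff k) * t^k := by
  rw [← toUni_evalEval, Polynomial.eval_eq_sum_range'
    (Nat.lt_succ_of_le Polynomial.natDegree_map_le)]
  simp [Polynomial.coeff_map]

lemma boundA {d : ℕ} (a : ℕ → ℂ) (w : ℂ) (t : ℝ) (hw : ‖w‖ = t) (ht : 1 ≤ t) :
    ‖(∑ k ∈ Finset.range (d+1), a k * w^k) * ((w^d)⁻¹) - a d‖
      ≤ (∑ k ∈ Finset.range (d+1), ‖a k‖) / t := by
  have ht0 : 0 < t := lt_of_lt_of_le one_pos ht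
  have hw0 : w ≠ 0 := by
    intro h
    rw [h, norm_zero] at hw
    linarith [hw ▸ ht]
  have hsplit : (∑ k ∈ Finset.range (d+1), a k * w^k) * ((w^d)⁻¹) - a d
      = ∑ k ∈ Finset.range d, a k * w^k * (w^d)⁻¹ := by
    rw [Finset.sum_range_succ, add_mul, mul_inv_cancel_right₀ (pow_ne_zero d hw0), Finset.sum_mul]
    ring
  rw [hsplit]
  calc ‖∑ k ∈ Finset.range d, a k * w^k * (w^d)⁻¹‖
      ≤ ∑ k ∈ Finset.range d, ‖a k * w^k * (w^d)⁻¹‖ := norm_sum_le _ _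
    _ ≤ ∑ k ∈ Finset.range d, ‖a k‖ / t := by
        apply Finset.sum_le_sum
        intro k hk
        rw [Finset.mem_range] at hk
        rw [norm_mul, norm_mul, norm_pow, norm_inv, norm_pow, hw]
        have hkd : t^k * t ≤ t^d := by
          calc t^k * t = t^(k+1) := (pow_succ t k).symm
            _ ≤ t^d := pow_le_pow_right₀ ht hk
        have hpow : t^k * (t^d)⁻¹ ≤ t⁻¹ := by
          rw [← div_eq_mul_inv, ← one_div, div_le_div_iff₀ (pow_pos ht0 d) ht0]
          simpa using hkd
        calc ‖a k‖ * t^k * (t^d)⁻¹ = ‖a k‖ * (t^k * (t^d)⁻¹) := by ring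
          _ ≤ ‖a k‖ * t⁻¹ := mul_le_mul_of_nonneg_left hpow (norm_nonneg _)
          _ = ‖a k‖ / t := by rw [div_eq_mul_inv]
    _ ≤ ∑ k ∈ Finset.range (d+1), ‖a k‖ / t := by
        apply Finset.sum_le_sum_of_subset_of_nonneg
        · exact Finset.range_subset_range.mpr (Nat.le_succ d)
        · intro k _ _; positivity
    _ = (∑ k ∈ Finset.range (d+1), ‖a k‖) / t := by rw [Finset.sum_div]

lemma boundB (d : ℕ) (a : ℕ → ℂ) (s : ℂ) (t : ℝ) (hs : ‖s‖ = t⁻¹) (ht : 1 ≤ t) :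
    ‖(∑ k ∈ Finset.range (d+1), a k * s^k) - a 0‖
      ≤ (∑ k ∈ Finset.range (d+1), ‖a k‖) / t := by
  have ht0 : 0 < t := lt_of_lt_of_le one_pos ht
  have hsplit : (∑ k ∈ Finset.range (d+1), a k * s^k) - a 0
      = ∑ k ∈ Finset.range d, a (k+1) * s^(k+1) := by
    rw [Finset.sum_range_succ']
    simp
  rw [hsplit]
  calc ‖∑ k ∈ Finset.range d, a (k+1) * s^(k+1)‖
      ≤ ∑ k ∈ Finset.range d, ‖a (k+1) * s^(k+1)‖ := norm_sum_le _ _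
    _ ≤ ∑ k ∈ Finset.range d, ‖a (k+1)‖ / t := by
        apply Finset.sum_le_sum
        intro k _
        rw [norm_mul, norm_pow, hs]
        have h1 : (t⁻¹)^(k+1) ≤ t⁻¹ := by
          calc (t⁻¹)^(k+1) ≤ (t⁻¹)^1 :=
                pow_le_pow_of_le_one (by positivity) (inv_le_one_of_one_le₀ ht) (by omega)
            _ = t⁻¹ := pow_one _
        calc ‖a (k+1)‖ * (t⁻¹)^(k+1) ≤ ‖a (k+1)‖ * t⁻¹ :=
              mul_le_mul_of_nonneg_left h1 (norm_nonneg _)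
          _ = ‖a (k+1)‖ / t := by rw [div_eq_mul_inv]
    _ ≤ (∑ k ∈ Finset.range (d+1), ‖a k‖) / t := by
        rw [div_eq_mul_inv, Finset.sum_mul]
        have h4 : ∑ k ∈ Finset.range (d+1), ‖a k‖ * t⁻¹
            = (∑ k ∈ Finset.range d, ‖a (k+1)‖ * t⁻¹) + ‖a 0‖ * t⁻¹ := by
          rw [Finset.sum_range_succ']
        rw [h4]
        have h2 : ∀ k, ‖a (k+1)‖ / t = ‖a (k+1)‖ * t⁻¹ := fun k => div_eq_mul_inv _ _
        simp only [h2]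
        have : 0 ≤ ‖a 0‖ * t⁻¹ := by positivity
        linarith

open Metric in
/-- The Hurwitz-type argument: a nonzero polynomial `W` that is the locally uniform limit,
along any complex line through an upper-half-space point, of functions nonvanishing on the
upper half-space, cannot vanish at an upper-half-space point. -/
lemma key {m : ℕ} (e : Fin m) (W : MvPolynomial (Fin m) ℂ) (hW : W ≠ 0)
    (d : ℕ) (cf : ℕ → MvPolynomial (Fin m) ℂ)
    (B : ℕ → (Fin m → ℂ) → ℂ)
    (hBne : ∀ n (z : Fin m → ℂ), (∀ i, 0 < (z i).im) → B n z ≠ 0)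
    (hBdiff : ∀ n (a v : Fin m → ℂ), Differentiable ℂ (fun u => B n (fun i => a i + u * v i)))
    (herr : ∀ n (z : Fin m → ℂ),
      ‖B n z - eval z W‖ ≤ (∑ k ∈ Finset.range (d+1), ‖eval z (cf k)‖) / ((n : ℝ)+1))
    (y : Fin m → ℂ) (hy : ∀ i, 0 < (y i).im) (h0 : eval y W = 0) : False := by
  -- a point where W is nonzero
  have hz1 : ∃ z1 : Fin m → ℂ, eval z1 W ≠ 0 := by
    by_contra h
    push_neg at h
    exact hW (MvPolynomial.funext (q := 0) (fun z => by simp [h z]))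
  obtain ⟨z1, hz1⟩ := hz1
  set v : Fin m → ℂ := fun i => z1 i - y i with hv
  set line : ℂ → (Fin m → ℂ) := fun u i => y i + u * v i with hline
  have hline0 : line 0 = y := funext fun i => by simp [hline]
  have hline1 : line 1 = z1 := funext fun i => by simp [hline, hv]
  -- the restriction of W to the line, as a univariate polynomial
  set f : Polynomial ℂ :=
    MvPolynomial.aeval (fun i => Polynomial.C (y i) + Polynomial.X * Polynomial.C (v i)) W
    with hfdef
  have hf : ∀ u : ℂ, f.eval u = eval (line u) W := by
    intro u
    have harg : (fun i => Polynomial.eval u (Polynomial.C (y i) + Polynomial.X * Polynomial.C (v i)))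
        = line u := by funext i; simp [hline]; ring
    rw [hfdef, evalLine, harg]
  have hfne : f ≠ 0 := by
    intro h
    apply hz1
    rw [← hline1, ← hf, h, Polynomial.eval_zero]
  -- radius bound keeping the line in the upper half space
  have hne : Nonempty (Fin m) := ⟨e⟩
  set r0 : ℝ := Finset.univ.inf' (Finset.univ_nonempty) (fun i => (y i).im / (2 * (‖v i‖ + 1)))
    with hr0def
  have hr0 : 0 < r0 := by
    rw [hr0def, Finset.lt_inf'_iff]
    intro i _
    have : (0:ℝ) < 2 * (‖v i‖ + 1) := by positivity
    exact div_pos (hy i) this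
  have hupper : ∀ i : Fin m, ∀ u : ℂ, ‖u‖ ≤ r0 → 0 < (line u i).im := by
    intro i u hu
    have h1 : r0 ≤ (y i).im / (2 * (‖v i‖ + 1)) :=
      Finset.inf'_le _ (Finset.mem_univ i)
    have h2 : |(u * v i).im| ≤ ‖u‖ * ‖v i‖ := by
      calc |(u * v i).im| ≤ ‖u * v i‖ := Complex.abs_im_le_norm _
        _ = ‖u‖ * ‖v i‖ := by rw [norm_mul]
    have h3 : ‖u‖ * ‖v i‖ ≤ r0 * ‖v i‖ := by
      apply mul_le_mul_of_nonneg_right hu (norm_nonneg _)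
    have h4 : r0 * ‖v i‖ < (y i).im := by
      have h5 : r0 * ‖v i‖ ≤ (y i).im / (2 * (‖v i‖ + 1)) * ‖v i‖ :=
        mul_le_mul_of_nonneg_right h1 (norm_nonneg _)
      have h6 : (y i).im / (2 * (‖v i‖ + 1)) * ‖v i‖ < (y i).im := by
        rw [div_mul_eq_mul_div, div_lt_iff₀ (by positivity)]
        nlinarith [hy i, norm_nonneg (v i)]
      linarith
    have : (line u i).im = (y i).im + (u * v i).im := by
      simp [hline, Complex.add_im]
    rw [this]
    have := abs_le.mp h2
    linarith
  -- choose a radius avoiding the roots of f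
  obtain ⟨r, hrIoc, hrN⟩ := (Set.Ioc_infinite hr0).exists_notMem_finset
    ((f.roots.map (fun z : ℂ => ‖z‖)).toFinset)
  have hr : 0 < r := hrIoc.1
  have hrr0 : r ≤ r0 := hrIoc.2
  have hsph : ∀ u ∈ sphere (0:ℂ) r, f.eval u ≠ 0 := by
    intro u hu hval
    apply hrN
    have : u ∈ f.roots := by
      rw [Polynomial.mem_roots hfne]
      exact hval
    rw [Multiset.mem_toFinset, Multiset.mem_map]
    refine ⟨u, this, ?_⟩
    rw [mem_sphere_zero_iff_norm] at hu
    rw [← hu]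
  -- the minimum of ‖f‖ on the sphere
  obtain ⟨us, husS, husmin⟩ := (isCompact_sphere (0:ℂ) r).exists_isMinOn
    (NormedSpace.sphere_nonempty.mpr hr.le)
    ((f.continuous_aeval).norm.continuousOn (s := sphere 0 r))
  set δ : ℝ := ‖f.eval us‖ with hδdef
  have hδpos : 0 < δ := norm_pos_iff.mpr (hsph us husS)
  have hδ : ∀ u ∈ sphere (0:ℂ) r, δ ≤ ‖f.eval u‖ := fun u hu => husmin hu
  -- the maximum of the error-coefficient sum on the closed ball
  set φ : ℂ → ℝ := fun u => ∑ k ∈ Finset.range (d+1), ‖eval (line u) (cf k)‖ with hφdef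
  have hφcont : Continuous φ := by
    apply continuous_finset_sum
    intro k _
    have heq : (fun u => eval (line u) (cf k)) = fun u =>
        (MvPolynomial.aeval (fun i => Polynomial.C (y i) + Polynomial.X * Polynomial.C (v i))
          (cf k)).eval u := by
      funext u
      have harg : (fun i => Polynomial.eval u (Polynomial.C (y i) + Polynomial.X * Polynomial.C (v i)))
          = line u := by funext i; simp [hline]; ring
      rw [evalLine, harg]
    have hc : Continuous fun u => eval (line u) (cf k) := by
      rw [heq]; exact Polynomial.continuous _
    exact hc.norm
  obtain ⟨uM, huMS, huMmax⟩ := (isCompact_closedBall (0:ℂ) r).exists_isMaxOn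
    ⟨0, mem_closedBall_self hr.le⟩ hφcont.continuousOn
  set M : ℝ := φ uM with hMdef
  -- choose n with M/(n+1) < δ/2
  obtain ⟨n, hn⟩ := exists_nat_gt (2 * M / δ)
  have hM0 : 0 ≤ M := by
    rw [hMdef, hφdef]
    exact Finset.sum_nonneg (fun k _ => norm_nonneg _)
  have hsmall : M / ((n:ℝ)+1) < δ / 2 := by
    rw [div_lt_div_iff₀ (by positivity) (by norm_num)]
    have : 2 * M < δ * ((n:ℝ)) := by
      rw [div_lt_iff₀ hδpos] at hn
      nlinarith
    nlinarith
  -- apply the minimum modulus principle to B n along the line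
  have hg : Differentiable ℂ (fun u => B n (line u)) := hBdiff n y v
  have hgne : ∀ u ∈ closedBall (0:ℂ) r, B n (line u) ≠ 0 := by
    intro u hu
    apply hBne
    intro i
    apply hupper i u
    rw [mem_closedBall_zero_iff] at hu
    linarith
  obtain ⟨u0, hu0S, hu0le⟩ := minmod hr hg hgne
  -- upper bound on the center value
  have hcenter : ‖B n (line 0)‖ < δ / 2 := by
    rw [hline0]
    have h1 := herr n y
    rw [h0, sub_zero] at h1
    have h2 : (∑ k ∈ Finset.range (d+1), ‖eval y (cf k)‖) ≤ M := by
      have := huMmax (mem_closedBall_self hr.le)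
      rw [hMdef]
      calc (∑ k ∈ Finset.range (d+1), ‖eval y (cf k)‖) = φ 0 := by
            simp only [hφdef, hline0]
        _ ≤ φ uM := this
    calc ‖B n y‖ ≤ (∑ k ∈ Finset.range (d+1), ‖eval y (cf k)‖) / ((n:ℝ)+1) := h1
      _ ≤ M / ((n:ℝ)+1) := by apply div_le_div_of_nonneg_right h2 (by positivity) |>.trans_eq rfl
      _ < δ / 2 := hsmall
  -- lower bound on the sphere value
  have hlower : δ / 2 ≤ ‖B n (line u0)‖ := by
    have h1 := herr n (line u0)
    have h2 : φ u0 ≤ M := huMmax (sphere_subset_closedBall hu0S)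
    have h3 : δ ≤ ‖eval (line u0) W‖ := by
      rw [← hf]; exact hδ u0 hu0S
    have h4 : ‖B n (line u0) - eval (line u0) W‖ ≤ M / ((n:ℝ)+1) := by
      refine h1.trans ?_
      apply div_le_div_of_nonneg_right _ (by positivity) |>.trans_eq rfl
      exact h2
    have h6 : ‖eval (line u0) W‖ - ‖B n (line u0)‖ ≤ M / ((n:ℝ)+1) := by
      have h7 := norm_sub_norm_le (eval (line u0) W) (B n (line u0))
      calc ‖eval (line u0) W‖ - ‖B n (line u0)‖ ≤ ‖eval (line u0) W - B n (line u0)‖ := h7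
        _ = ‖B n (line u0) - eval (line u0) W‖ := by rw [norm_sub_rev]
        _ ≤ M / ((n:ℝ)+1) := h4
    linarith
  linarith [hu0le, hcenter, hlower]

lemma delEval {m : ℕ} (e : Fin m) (Z : MvPolynomial (Fin m) ℝ) (z : Fin m → ℂ) :
    eval z (MvPolynomial.map (algebraMap ℝ ℂ) (del e Z))
      = eval (Function.update z e 0) (MvPolynomial.map (algebraMap ℝ ℂ) Z) := by
  induction Z using MvPolynomial.induction_on with
  | C a => simp [del]
  | add p q hp hq =>
    simp only [del, map_add, eval_add] at *
    rw [hp, hq]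
  | mul_X p i hp =>
    simp only [del, map_mul, eval_mul] at *
    rw [hp]
    congr 1
    by_cases h : i = e <;> simp [h, Function.update_apply]

lemma partA {m : ℕ} (Z : MvPolynomial (Fin m) ℝ) (hZ : Stable Z) (e : Fin m)
    (hD : pderiv e Z ≠ 0) : Stable (pderiv e Z) := by
  intro y hy heval
  have hP : ∀ z : Fin m → ℂ, (∀ i, 0 < (z i).im)
      → eval z (MvPolynomial.map (algebraMap ℝ ℂ) Z) ≠ 0 := hZ
  set P : MvPolynomial (Fin m) ℂ := MvPolynomial.map (algebraMap ℝ ℂ) Z with hPdef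
  set Q : Polynomial (MvPolynomial (Fin m) ℂ) := toUni e P with hQdef
  set d : ℕ := Q.natDegree with hddef
  have hpd : pderiv e P = MvPolynomial.map (algebraMap ℝ ℂ) (pderiv e Z) := pderiv_map
  have hDP : pderiv e P ≠ 0 := by
    rw [hpd]
    intro h
    exact hD (MvPolynomial.map_injective _ (algebraMap ℝ ℂ).injective
      (by rw [h, map_zero]))
  have heval0' : eval y (pderiv e P) = 0 := by rw [hpd]; exact heval
  set q : Polynomial ℂ := Q.map (eval y : MvPolynomial (Fin m) ℂ →+* ℂ) with hqdef
  have hqt : ∀ t : ℂ, 0 < t.im → q.eval t ≠ 0 := by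
    intro t ht
    rw [hqdef, hQdef, toUni_evalEval]
    exact hP _ (updIm e y t ht hy)
  have hq'0 : (Polynomial.derivative q).eval (y e) = 0 := by
    rw [hqdef, hQdef, Polynomial.derivative_map, toUni_derivative, toUni_evalEval,
      Function.update_eq_self]
    exact heval0'
  have hq0 := gaussLucas q hqt (hy e) hq'0
  have hder' : (Polynomial.derivative Q).map (eval y : MvPolynomial (Fin m) ℂ →+* ℂ) = 0 := by
    rw [← Polynomial.derivative_map]
    exact hq0
  have hQderne : Polynomial.derivative Q ≠ 0 := by
    rw [hQdef, toUni_derivative]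
    intro h
    exact hDP (toUni_eq_zero e _ h)
  have hd1 : 1 ≤ d := by
    by_contra hcon
    push_neg at hcon
    have hd0 : Q.natDegree = 0 := by rw [← hddef]; omega
    obtain ⟨c, hc⟩ := Polynomial.natDegree_eq_zero.mp hd0
    apply hQderne
    rw [← hc]
    simp
  have hQne : Q ≠ 0 := by
    intro h
    apply hQderne
    rw [h]; simp
  have hWne : Q.coeff d ≠ 0 := by
    have h := Polynomial.leadingCoeff_ne_zero.mpr hQne
    rwa [Polynomial.leadingCoeff, ← hddef] at h
  have hevalcd : eval y (Q.coeff d) = 0 := by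
    have h1 : eval y ((Polynomial.derivative Q).coeff (d-1)) = 0 := by
      have h2 := congrArg (fun p : Polynomial ℂ => p.coeff (d-1)) hder'
      simpa [Polynomial.coeff_map] using h2
    rw [Polynomial.coeff_derivative] at h1
    have hdd : d - 1 + 1 = d := Nat.succ_pred_eq_of_pos hd1
    rw [hdd, map_mul] at h1
    have h5 : (eval y) ((((d - 1 : ℕ) : MvPolynomial (Fin m) ℂ)) + 1)
        = (((d - 1 : ℕ) : ℂ) + 1) := by simp
    rw [h5] at h1
    have h4 : (((d - 1 : ℕ) : ℂ) + 1) ≠ 0 := by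
      have h6 : (((d - 1 : ℕ) : ℂ) + 1) = ((d : ℕ) : ℂ) := by
        exact_mod_cast congrArg (fun k : ℕ => (k : ℂ)) hdd
      rw [h6]
      exact Nat.cast_ne_zero.mpr (by omega)
    exact (mul_eq_zero.mp h1).resolve_right h4
  have him : ∀ n : ℕ, 0 < (Complex.I * (((n:ℝ)+1 : ℝ) : ℂ)).im := by
    intro n
    simp [Complex.mul_im]
    positivity
  have hwne : ∀ n : ℕ, (Complex.I * (((n:ℝ)+1 : ℝ) : ℂ)) ≠ 0 := by
    intro n
    apply mul_ne_zero Complex.I_ne_zero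
    rw [Complex.ofReal_ne_zero]
    positivity
  have hwnorm : ∀ n : ℕ, ‖Complex.I * (((n:ℝ)+1 : ℝ) : ℂ)‖ = (n:ℝ)+1 := by
    intro n
    rw [norm_mul, Complex.norm_I, one_mul, Complex.norm_real, Real.norm_eq_abs,
      abs_of_nonneg (by positivity)]
  have ht1 : ∀ n : ℕ, (1:ℝ) ≤ (n:ℝ)+1 := by
    intro n
    have : (0:ℝ) ≤ (n:ℝ) := Nat.cast_nonneg n
    linarith
  exact key e (Q.coeff d) hWne d (fun k => Q.coeff k)
    (fun n z => eval (Function.update z e (Complex.I * (((n:ℝ)+1 : ℝ) : ℂ))) P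
      * (((Complex.I * (((n:ℝ)+1 : ℝ) : ℂ)))^d)⁻¹)
    (fun n z hz => mul_ne_zero (hP _ (updIm e z _ (him n) hz))
      (inv_ne_zero (pow_ne_zero _ (hwne n))))
    (fun n a v => (diffLineUpd P e _ a v).mul_const _)
    (fun n z => by
      beta_reduce
      rw [expand e P z]
      exact boundA (fun k => eval z (Q.coeff k)) _ _ (hwnorm n) (ht1 n))
    y hy hevalcd

lemma partB {m : ℕ} (Z : MvPolynomial (Fin m) ℝ) (hZ : Stable Z) (e : Fin m)
    (hdel : del e Z ≠ 0) : Stable (del e Z) := by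
  intro y hy heval
  have hP : ∀ z : Fin m → ℂ, (∀ i, 0 < (z i).im)
      → eval z (MvPolynomial.map (algebraMap ℝ ℂ) Z) ≠ 0 := hZ
  set P : MvPolynomial (Fin m) ℂ := MvPolynomial.map (algebraMap ℝ ℂ) Z with hPdef
  set Q : Polynomial (MvPolynomial (Fin m) ℂ) := toUni e P with hQdef
  set d : ℕ := Q.natDegree with hddef
  have hWne : MvPolynomial.map (algebraMap ℝ ℂ) (del e Z) ≠ 0 := by
    intro h
    exact hdel (MvPolynomial.map_injective _ (algebraMap ℝ ℂ).injective
      (by rw [h, map_zero]))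
  have hPdelz : ∀ z : Fin m → ℂ,
      eval z (MvPolynomial.map (algebraMap ℝ ℂ) (del e Z)) = eval z (Q.coeff 0) := by
    intro z
    rw [delEval e Z z]
    rw [hQdef, expand e P z]
    rw [Finset.sum_range_succ']
    simp
  have him : ∀ n : ℕ, 0 < (Complex.I * (((((n:ℝ)+1)⁻¹ : ℝ)) : ℂ)).im := by
    intro n
    simp [Complex.mul_im]
    apply div_pos
    · positivity
    · apply Complex.normSq_pos.mpr
      intro h
      have h9 := congrArg Complex.re h
      simp at h9
      linarith [Nat.cast_nonneg (α := ℝ) n]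
  have hsnorm : ∀ n : ℕ, ‖Complex.I * (((((n:ℝ)+1)⁻¹ : ℝ)) : ℂ)‖ = ((n:ℝ)+1)⁻¹ := by
    intro n
    rw [norm_mul, Complex.norm_I, one_mul, Complex.norm_real, Real.norm_eq_abs,
      abs_of_nonneg (by positivity)]
  have ht1 : ∀ n : ℕ, (1:ℝ) ≤ (n:ℝ)+1 := by
    intro n
    have : (0:ℝ) ≤ (n:ℝ) := Nat.cast_nonneg n
    linarith
  exact key e (MvPolynomial.map (algebraMap ℝ ℂ) (del e Z)) hWne d (fun k => Q.coeff k)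
    (fun n z => eval (Function.update z e (Complex.I * (((((n:ℝ)+1)⁻¹ : ℝ)) : ℂ))) P)
    (fun n z hz => hP _ (updIm e z _ (him n) hz))
    (fun n a v => diffLineUpd P e _ a v)
    (fun n z => by
      beta_reduce
      rw [expand e P z, hPdelz z]
      exact boundB d (fun k => eval z (Q.coeff k)) _ _ (hsnorm n) (ht1 n))
    y hy heval

end StableMinorsAux

theorem stable_minors {m : ℕ} (Z : MvPolynomial (Fin m) ℝ)
    (hZ : Stable Z) (e : Fin m) :
    (pderiv e Z = 0 ∨ Stable (pderiv e Z)) ∧ (del e Z = 0 ∨ Stable (del e Z)) := by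
  constructor
  · by_cases hD : pderiv e Z = 0
    · exact Or.inl hD
    · exact Or.inr (StableMinorsAux.partA Z hZ e hD)
  · by_cases hdel : del e Z = 0
    · exact Or.inl hdel
    · exact Or.inr (StableMinorsAux.partB Z hZ e hdel)
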